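/- Let n ≥ 1. For every continuously differentiable ℤⁿ-periodic vector field w : ℝⁿ → ℝⁿ there holds ∫_Y (∇·w)² + (1/2)∫_Y |Dw − (Dw)ᵀ|² = ∫_Y |Dw|², where Dw is the Jacobian matrix of w, ∇·w = tr(Dw) its divergence, and |M| denotes the Frobenius norm of a matrix M. -/

import Mathlib

open MeasureTheory

open Pointwise

noncomputable section

/-- The unit cell `Y = (0,1)^n`. -/
def unitCell (n : ℕ) : Set (Fin n → ℝ) := Set.univ.pi fun _ => Set.Ioo (0 : ℝ) 1

/-- Frobenius norm squared of a matrix. -/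
def frobSq {n : ℕ} (M : Matrix (Fin n) (Fin n) ℝ) : ℝ := ∑ i, ∑ j, (M i j) ^ 2

/-- Frobenius inner product of two matrices. -/
def frobInner {n : ℕ} (M N : Matrix (Fin n) (Fin n) ℝ) : ℝ := ∑ i, ∑ j, M i j * N i j

/-- Euclidean norm squared of a vector. -/
def euclSq {n : ℕ} (v : Fin n → ℝ) : ℝ := ∑ i, (v i) ^ 2

/-- Euclidean dot product. -/
def dotc {n : ℕ} (v w : Fin n → ℝ) : ℝ := ∑ i, v i * w i

/-- `ℤⁿ`-periodicity of a function on `ℝⁿ`. -/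
def IsPeriodic {n : ℕ} {α : Type*} (f : (Fin n → ℝ) → α) : Prop :=
  ∀ (x : Fin n → ℝ) (k : Fin n → ℤ), f (x + fun i => (k i : ℝ)) = f x

/-- Partial derivative in direction `i`. -/
def pd {n : ℕ} (f : (Fin n → ℝ) → ℝ) (i : Fin n) (x : Fin n → ℝ) : ℝ :=
  fderiv ℝ f x (Pi.single i 1)

/-- Gradient. -/
def grad {n : ℕ} (f : (Fin n → ℝ) → ℝ) (x : Fin n → ℝ) : Fin n → ℝ := fun i => pd f i x

/-- Hessian matrix. -/
def hess {n : ℕ} (f : (Fin n → ℝ) → ℝ) (x : Fin n → ℝ) : Matrix (Fin n) (Fin n) ℝ :=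
  Matrix.of fun i j => pd (pd f j) i x

/-- Laplacian. -/
def lap {n : ℕ} (f : (Fin n → ℝ) → ℝ) (x : Fin n → ℝ) : ℝ := ∑ i, pd (pd f i) i x

/-- Jacobian matrix of a vector field: `(jac w x) i j = ∂_j w_i (x)`. -/
def jac {n : ℕ} (w : (Fin n → ℝ) → Fin n → ℝ) (x : Fin n → ℝ) : Matrix (Fin n) (Fin n) ℝ :=
  Matrix.of fun i j => pd (fun y => w y i) j x

/-- Divergence of a vector field. -/
def divg {n : ℕ} (w : (Fin n → ℝ) → Fin n → ℝ) (x : Fin n → ℝ) : ℝ :=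
  ∑ i, pd (fun y => w y i) i x

/-- Setting B: symmetric-valued, measurable, `ℤⁿ`-periodic, essentially bounded coefficients,
uniform ellipticity, and the Cordes-type condition with constant `δ ∈ (n/(n+π²), 1]`. -/
structure SettingB {n : ℕ} (A : (Fin n → ℝ) → Matrix (Fin n) (Fin n) ℝ)
    (b : (Fin n → ℝ) → Fin n → ℝ) (lam Lam δ : ℝ) : Prop where
  symm : ∀ x, (A x).IsSymm
  measA : ∀ i j, Measurable fun x => A x i j
  measb : ∀ i, Measurable fun x => b x i
  perA : IsPeriodic A
  perb : IsPeriodic b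
  bddA : ∃ C : ℝ, ∀ᵐ x ∂(volume : Measure (Fin n → ℝ)), frobSq (A x) ≤ C
  bddb : ∃ C : ℝ, ∀ᵐ x ∂(volume : Measure (Fin n → ℝ)), euclSq (b x) ≤ C
  lam_pos : 0 < lam
  lam_le_Lam : lam ≤ Lam
  ellip : ∀ᵐ x ∂(volume : Measure (Fin n → ℝ)), ∀ ξ : Fin n → ℝ,
    lam * euclSq ξ ≤ dotc ξ (Matrix.mulVec (A x) ξ) ∧
      dotc ξ (Matrix.mulVec (A x) ξ) ≤ Lam * euclSq ξ
  delta_mem : δ ∈ Set.Ioc ((n : ℝ) / ((n : ℝ) + Real.pi ^ 2)) 1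
  cordes : ∀ᵐ x ∂(volume : Measure (Fin n → ℝ)),
    (frobSq (A x) + euclSq (b x)) / (Matrix.trace (A x)) ^ 2 ≤ 1 / ((n : ℝ) - 1 + δ)

/-- The renormalization function `γ = tr A / (|A|² + |b|²)`. -/
def gam {n : ℕ} (A : (Fin n → ℝ) → Matrix (Fin n) (Fin n) ℝ)
    (b : (Fin n → ℝ) → Fin n → ℝ) (x : Fin n → ℝ) : ℝ :=
  Matrix.trace (A x) / (frobSq (A x) + euclSq (b x))

/-- The constant `κ = (δ − n/(n+π²))·(n+π²)/π²`. -/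
def kappa (n : ℕ) (δ : ℝ) : ℝ :=
  (δ - (n : ℝ) / ((n : ℝ) + Real.pi ^ 2)) * (((n : ℝ) + Real.pi ^ 2) / Real.pi ^ 2)

/-- The invariant measure: measurable, `ℤⁿ`-periodic, square-integrable over `Y`,
with unit mass over `Y`, solving the stationary FPK equation in the very weak sense. -/
def IsInvariantMeasure {n : ℕ} (A : (Fin n → ℝ) → Matrix (Fin n) (Fin n) ℝ)
    (b : (Fin n → ℝ) → Fin n → ℝ) (r : (Fin n → ℝ) → ℝ) : Prop :=
  Measurable r ∧ IsPeriodic r ∧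
    IntegrableOn (fun x => (r x) ^ 2) (unitCell n) ∧
    (∫ x in unitCell n, r x) = 1 ∧
    ∀ φ : (Fin n → ℝ) → ℝ, ContDiff ℝ 2 φ → IsPeriodic φ →
      (∫ x in unitCell n,
        r x * (frobInner (A x) (hess φ x) + dotc (b x) (grad φ x))) = 0

/-- The bilinear form `B₂`. -/
def B2 {n : ℕ} (A : (Fin n → ℝ) → Matrix (Fin n) (Fin n) ℝ)
    (b : (Fin n → ℝ) → Fin n → ℝ) (v w : (Fin n → ℝ) → Fin n → ℝ) : ℝ :=
  (∫ x in unitCell n,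
    divg v x * (frobInner (gam A b x • A x) (jac w x) + dotc (gam A b x • b x) (w x)))
  + (1 / 2) * ∫ x in unitCell n,
      frobInner (jac v x - (jac v x).transpose) (jac w x - (jac w x).transpose)

namespace Stmt15Aux

variable {n : ℕ}

/-- lattice -/
abbrev Lat (n : ℕ) : Submodule ℤ (Fin n → ℝ) := Submodule.span ℤ (Set.range (Pi.basisFun ℝ (Fin n)))

lemma lat_coords (v : Fin n → ℝ) (hv : v ∈ Lat n) : ∃ k : Fin n → ℤ, v = fun i => (k i : ℝ) := by
  induction hv using Submodule.span_induction with
  | mem x hx =>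
    obtain ⟨i, rfl⟩ := hx
    refine ⟨Pi.single i 1, ?_⟩
    ext j
    by_cases h : j = i
    · subst h; simp
    · simp [Pi.single_eq_of_ne h, Pi.basisFun_apply, Pi.single_eq_of_ne h]
  | zero => exact ⟨0, by ext j; simp⟩
  | add x y _ _ hx hy =>
    obtain ⟨k, rfl⟩ := hx; obtain ⟨l, rfl⟩ := hy
    exact ⟨k + l, by ext j; simp⟩
  | smul c x _ hx =>
    obtain ⟨k, rfl⟩ := hx
    exact ⟨c • k, by ext j; simp⟩

lemma isPeriodic_vadd {α : Type*} {f : (Fin n → ℝ) → α} (hf : IsPeriodic f)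
    (g : Lat n) (x : Fin n → ℝ) : f (g +ᵥ x) = f x := by
  obtain ⟨k, hk⟩ := lat_coords (g : Fin n → ℝ) g.2
  have : (g : Fin n → ℝ) +ᵥ x = x + fun i => (k i : ℝ) := by
    rw [hk]; ext j; simp [add_comm]
  rw [show g +ᵥ x = (g : Fin n → ℝ) +ᵥ x from rfl, this, hf]


lemma unitCell_ae_eq :
    unitCell n =ᵐ[(volume : Measure (Fin n → ℝ))] ZSpan.fundamentalDomain (Pi.basisFun ℝ (Fin n)) := by
  rw [ZSpan.fundamentalDomain_pi_basisFun]
  exact MeasureTheory.Measure.ae_eq_set_pi fun i _ => Ioo_ae_eq_Ico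

instance : VAddCommClass (Fin n → ℝ) (Lat n) (Fin n → ℝ) :=
  ⟨fun g l x => by
    show g + ((l : Fin n → ℝ) + x) = (l : Fin n → ℝ) + (g + x)
    abel⟩

instance : MeasurableVAdd (Lat n) (Fin n → ℝ) :=
  { measurable_const_vadd := fun g => (measurable_const_add (g : Fin n → ℝ)).comp measurable_id |>.mono le_rfl le_rfl,
    measurable_vadd_const := fun x => (measurable_subtype_coe.add_const x) }

instance : VAddInvariantMeasure (Lat n) (Fin n → ℝ) (volume : Measure (Fin n → ℝ)) :=
  ⟨fun l s hs => by
    show volume ((fun x => (l : Fin n → ℝ) + x) ⁻¹' s) = volume s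
    exact measure_preimage_add volume _ s⟩

lemma integral_translate {F : (Fin n → ℝ) → ℝ} (hF : IsPeriodic F) (v : Fin n → ℝ) :
    (∫ x in unitCell n, F (x + v)) = ∫ x in unitCell n, F x := by
  have hD : IsAddFundamentalDomain (Lat n) (ZSpan.fundamentalDomain (Pi.basisFun ℝ (Fin n)))
      (volume : Measure (Fin n → ℝ)) := ZSpan.isAddFundamentalDomain _ _
  have hDv : IsAddFundamentalDomain (Lat n)
      (v +ᵥ ZSpan.fundamentalDomain (Pi.basisFun ℝ (Fin n))) volume := hD.vadd_of_comm v
  have h1 : (∫ x in unitCell n, F (x + v)) =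
      ∫ x in ZSpan.fundamentalDomain (Pi.basisFun ℝ (Fin n)), F (x + v) :=
    setIntegral_congr_set unitCell_ae_eq
  have h2 : (∫ x in unitCell n, F x) =
      ∫ x in ZSpan.fundamentalDomain (Pi.basisFun ℝ (Fin n)), F x :=
    setIntegral_congr_set unitCell_ae_eq
  rw [h1, h2]
  have hmp : MeasurePreserving (fun x : Fin n → ℝ => x + v) volume volume :=
    measurePreserving_add_right volume v
  have hemb : MeasurableEmbedding (fun x : Fin n → ℝ => x + v) :=
    (MeasurableEquiv.addRight v).measurableEmbedding
  have hpre : (fun x : Fin n → ℝ => x + v) ⁻¹' (v +ᵥ ZSpan.fundamentalDomain (Pi.basisFun ℝ (Fin n)))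
      = ZSpan.fundamentalDomain (Pi.basisFun ℝ (Fin n)) := by
    ext x
    simp only [Set.mem_preimage, Set.mem_vadd_set, vadd_eq_add]
    constructor
    · rintro ⟨y, hy, h⟩
      have hyx : y = x := by
        have : v + y = v + x := by rw [h]; abel
        exact add_left_cancel this
      rwa [← hyx]
    · intro hx; exact ⟨x, hx, by abel⟩
  have key := hmp.setIntegral_preimage_emb hemb F
    (v +ᵥ ZSpan.fundamentalDomain (Pi.basisFun ℝ (Fin n)))
  rw [hpre] at key
  rw [key]
  exact hDv.setIntegral_eq hD (fun g x => isPeriodic_vadd hF g x)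


/-- closed unit cube -/
abbrev cube (n : ℕ) : Set (Fin n → ℝ) := Set.univ.pi fun _ => Set.Icc (0 : ℝ) 1

lemma isCompact_cube : IsCompact (cube n) := isCompact_univ_pi fun _ => isCompact_Icc

lemma unitCell_subset_cube : unitCell n ⊆ cube n :=
  Set.pi_mono fun i _ => Set.Ioo_subset_Icc_self

lemma exists_shift_mem_cube (x : Fin n → ℝ) : ∃ k : Fin n → ℤ, (x + fun i => (k i : ℝ)) ∈ cube n := by
  refine ⟨fun i => -⌊x i⌋, fun i _ => ?_⟩
  have h1 := Int.fract_nonneg (x i)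
  have h2 := (Int.fract_lt_one (x i)).le
  simp only [Pi.add_apply, Int.cast_neg]
  constructor
  · simpa [Int.fract, sub_eq_add_neg] using h1
  · simpa [Int.fract, sub_eq_add_neg] using h2

lemma bounded_of_periodic {F : (Fin n → ℝ) → ℝ} (hF : Continuous F) (hFp : IsPeriodic F) :
    ∃ C : ℝ, ∀ x, |F x| ≤ C := by
  obtain ⟨C, hC⟩ := isCompact_cube.exists_bound_of_continuousOn (hF.continuousOn (s := cube n))
  refine ⟨C, fun x => ?_⟩
  obtain ⟨k, hk⟩ := exists_shift_mem_cube x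
  calc |F x| = |F (x + fun i => (k i : ℝ))| := by rw [hFp x k]
    _ ≤ C := by simpa [Real.norm_eq_abs] using hC _ hk

lemma integrableOn_unitCell {F : (Fin n → ℝ) → ℝ} (hF : Continuous F) :
    IntegrableOn F (unitCell n) (volume : Measure (Fin n → ℝ)) :=
  (hF.continuousOn.integrableOn_compact isCompact_cube).mono_set unitCell_subset_cube

lemma isPeriodic_pd {f : (Fin n → ℝ) → ℝ} (hfp : IsPeriodic f) (i : Fin n) :
    IsPeriodic (pd f i) := by
  intro x k
  unfold pd
  congr 1
  -- fderiv ℝ f (x + k) = fderiv ℝ f x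
  by_cases hd : DifferentiableAt ℝ f (x + fun i => (k i : ℝ))
  · have hT : HasFDerivAt (fun y : Fin n → ℝ => y + fun i => (k i : ℝ))
        (ContinuousLinearMap.id ℝ (Fin n → ℝ)) x := (hasFDerivAt_id x).add_const _
    have hcomp := hd.hasFDerivAt.comp x hT
    have heq : (fun y : Fin n → ℝ => f (y + fun i => (k i : ℝ))) = f := by
      funext y; exact hfp y k
    rw [show (f ∘ fun y : Fin n → ℝ => y + fun i => (k i : ℝ)) = f from heq] at hcomp
    simpa using hcomp.fderiv.symm
  · have hd' : ¬ DifferentiableAt ℝ f x := by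
      intro h
      apply hd
      set y₀ : Fin n → ℝ := x + fun i => (k i : ℝ) with hy₀
      have hT : HasFDerivAt (fun y : Fin n → ℝ => y + fun i => (-(k i) : ℝ))
          (ContinuousLinearMap.id ℝ (Fin n → ℝ)) y₀ := (hasFDerivAt_id _).add_const _
      have harg : (y₀ + fun i => (-(k i) : ℝ)) = x := by ext j; simp [hy₀]
      have h2 : HasFDerivAt f (fderiv ℝ f x) (y₀ + fun i => (-(k i) : ℝ)) := by
        rw [harg]; exact h.hasFDerivAt
      have hcomp := h2.comp y₀ hT
      have heq : (f ∘ fun y : Fin n → ℝ => y + fun i => (-(k i) : ℝ)) = f := by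
        funext y
        have := hfp y (-k)
        simpa using this
      rw [heq] at hcomp
      exact hcomp.differentiableAt
    rw [fderiv_zero_of_not_differentiableAt hd, fderiv_zero_of_not_differentiableAt hd']

lemma continuous_pd {f : (Fin n → ℝ) → ℝ} (hf : ContDiff ℝ 1 f) (i : Fin n) :
    Continuous (pd f i) :=
  (hf.continuous_fderiv one_ne_zero).clm_apply continuous_const


lemma measurableSet_unitCell : MeasurableSet (unitCell n) :=
  MeasurableSet.univ_pi fun _ => measurableSet_Ioo

lemma isPeriodic_add_vec {α : Type*} {f : (Fin n → ℝ) → α} (hf : IsPeriodic f) (v : Fin n → ℝ) :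
    IsPeriodic (fun x => f (x + v)) := by
  intro x k
  have : ((x + fun i => (k i : ℝ)) + v) = (x + v) + fun i => (k i : ℝ) := by
    ext j; simp; ring
  simp only [this, hf (x + v) k]

lemma isPeriodic_mul {f g : (Fin n → ℝ) → ℝ} (hf : IsPeriodic f) (hg : IsPeriodic g) :
    IsPeriodic (fun x => f x * g x) := fun x k => by simp only [hf x k, hg x k]

/-- integral of a partial derivative of a C¹ periodic function over the cell vanishes -/
lemma hasDerivAt_shift_integral {f h : (Fin n → ℝ) → ℝ} (hf : ContDiff ℝ 1 f)
    (hfp : IsPeriodic f) (hh : Continuous h) (j : Fin n) :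
    HasDerivAt (fun t : ℝ => ∫ x in unitCell n, f (x + t • (Pi.single j 1 : Fin n → ℝ)) * h x)
      (∫ x in unitCell n, pd f j x * h x) 0 := by
  set e : Fin n → ℝ := Pi.single j 1 with he
  obtain ⟨C, hC⟩ := bounded_of_periodic (continuous_pd hf j) (isPeriodic_pd hfp j)
  have hline : ∀ t : ℝ, ∀ x : Fin n → ℝ,
      HasDerivAt (fun s : ℝ => f (x + s • e)) (pd f j (x + t • e)) t := by
    intro t x
    have hc : HasDerivAt (fun s : ℝ => x + s • e) e t := by
      simpa using ((hasDerivAt_id t).smul_const e).const_add x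
    have hfd : HasFDerivAt f (fderiv ℝ f (x + t • e)) (x + t • e) :=
      (hf.differentiable one_ne_zero _).hasFDerivAt
    have := hfd.comp_hasDerivAt t hc
    simpa [pd, he, Function.comp_def] using this
  have hF_meas : ∀ᶠ t in nhds (0 : ℝ),
      AEStronglyMeasurable (fun x => f (x + t • e) * h x)
        ((volume : Measure (Fin n → ℝ)).restrict (unitCell n)) := by
    filter_upwards with t
    exact ((hf.continuous.comp (continuous_id.add continuous_const)).mul hh).aestronglyMeasurable
  have hF_int : Integrable (fun x => f (x + (0 : ℝ) • e) * h x)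
      ((volume : Measure (Fin n → ℝ)).restrict (unitCell n)) := by
    have hcont : Continuous fun x : Fin n → ℝ => f (x + (0 : ℝ) • e) * h x :=
      (hf.continuous.comp (continuous_id.add continuous_const)).mul hh
    exact integrableOn_unitCell hcont
  have hF'_meas : AEStronglyMeasurable (fun x => pd f j (x + (0:ℝ) • e) * h x)
      ((volume : Measure (Fin n → ℝ)).restrict (unitCell n)) :=
    (((continuous_pd hf j).comp (continuous_id.add continuous_const)).mul hh).aestronglyMeasurable
  have h_bound : ∀ᵐ x ∂((volume : Measure (Fin n → ℝ)).restrict (unitCell n)),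
      ∀ t ∈ Metric.ball (0 : ℝ) 1, ‖pd f j (x + t • e) * h x‖ ≤ C * |h x| := by
    filter_upwards with x t _
    rw [norm_mul, Real.norm_eq_abs, Real.norm_eq_abs]
    exact mul_le_mul_of_nonneg_right (hC _) (abs_nonneg _)
  have hbi : Integrable (fun x => C * |h x|)
      ((volume : Measure (Fin n → ℝ)).restrict (unitCell n)) :=
    (integrableOn_unitCell (hh.abs)).const_mul C
  have h_diff : ∀ᵐ x ∂((volume : Measure (Fin n → ℝ)).restrict (unitCell n)),
      ∀ t ∈ Metric.ball (0 : ℝ) 1,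
        HasDerivAt (fun s => f (x + s • e) * h x) (pd f j (x + t • e) * h x) t := by
    filter_upwards with x t _
    exact (hline t x).mul_const (h x)
  have := (hasDerivAt_integral_of_dominated_loc_of_deriv_le (F := fun t x => f (x + t • e) * h x)
      (F' := fun t x => pd f j (x + t • e) * h x) (bound := fun x => C * |h x|)
      (Metric.ball_mem_nhds 0 one_pos) hF_meas hF_int hF'_meas h_bound hbi h_diff).2
  simpa using this


lemma integral_pd_eq_zero {H : (Fin n → ℝ) → ℝ} (hH : ContDiff ℝ 1 H) (hHp : IsPeriodic H)
    (i : Fin n) : (∫ x in unitCell n, pd H i x) = 0 := by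
  have hd := hasDerivAt_shift_integral hH hHp continuous_const (h := fun _ => (1 : ℝ)) i
  have hconst : (fun t : ℝ => ∫ x in unitCell n, H (x + t • (Pi.single i 1 : Fin n → ℝ)) * 1)
      = fun _ : ℝ => ∫ x in unitCell n, H x * 1 := by
    funext t
    exact integral_translate (isPeriodic_mul hHp (show IsPeriodic (fun _ : Fin n → ℝ => (1:ℝ)) from fun _ _ => rfl)) _
  rw [hconst] at hd
  have := hd.unique (hasDerivAt_const 0 _)
  simpa using this

/-- Key integration by parts identity -/
lemma key_ibp {f g : (Fin n → ℝ) → ℝ} (hf : ContDiff ℝ 1 f) (hfp : IsPeriodic f)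
    (hg : ContDiff ℝ 1 g) (hgp : IsPeriodic g) (i j : Fin n) :
    (∫ x in unitCell n, pd f j x * pd g i x) = ∫ x in unitCell n, pd f i x * pd g j x := by
  set e : Fin n → ℝ := Pi.single j 1 with he
  -- Φ t = ∫ f(x + t e) ∂i g(x)
  have hΦ := hasDerivAt_shift_integral hf hfp (continuous_pd hg i) j
  -- Θ t = ∫ g(x + t e) ∂i f(x)
  have hΘ := hasDerivAt_shift_integral hg hgp (continuous_pd hf i) j
  -- Φ t = - Θ (-t)
  have hkey : ∀ t : ℝ,
      (∫ x in unitCell n, f (x + t • e) * pd g i x)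
        = - ∫ x in unitCell n, g (x + (-t) • e) * pd f i x := by
    intro t
    -- H_t x = f (x + t e) * g x is C¹ periodic; ∫ ∂i H_t = 0
    have hHt : ContDiff ℝ 1 (fun x : Fin n → ℝ => f (x + t • e) * g x) :=
      (hf.comp ((contDiff_id.add contDiff_const))).mul hg
    have hHtp : IsPeriodic (fun x : Fin n → ℝ => f (x + t • e) * g x) :=
      isPeriodic_mul (isPeriodic_add_vec hfp _) hgp
    have hzero := integral_pd_eq_zero hHt hHtp i
    -- product rule: pd of H_t
    have hprod : ∀ x : Fin n → ℝ, pd (fun x => f (x + t • e) * g x) i x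
        = pd f i (x + t • e) * g x + f (x + t • e) * pd g i x := by
      intro x
      have h1 : HasFDerivAt (fun y : Fin n → ℝ => y + t • e)
          (ContinuousLinearMap.id ℝ (Fin n → ℝ)) x := (hasFDerivAt_id x).add_const _
      have h2 : HasFDerivAt f (fderiv ℝ f (x + t • e)) (x + t • e) :=
        (hf.differentiable one_ne_zero _).hasFDerivAt
      have h3 : HasFDerivAt (fun y : Fin n → ℝ => f (y + t • e))
          ((fderiv ℝ f (x + t • e)).comp (ContinuousLinearMap.id ℝ (Fin n → ℝ))) x :=
        h2.comp x h1
      have h4 : HasFDerivAt g (fderiv ℝ g x) x := (hg.differentiable one_ne_zero _).hasFDerivAt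
      have h5 := h3.mul h4
      have : fderiv ℝ (fun x => f (x + t • e) * g x) x = _ := h5.fderiv
      simp only [pd, this]
      simp [ContinuousLinearMap.comp_apply]
      ring
    rw [show (fun x : Fin n → ℝ => pd (fun x => f (x + t • e) * g x) i x)
        = fun x => pd f i (x + t • e) * g x + f (x + t • e) * pd g i x from funext hprod] at hzero
    -- split the integral
    have int1 : IntegrableOn (fun x : Fin n → ℝ => pd f i (x + t • e) * g x) (unitCell n)
        (volume : Measure (Fin n → ℝ)) :=
      integrableOn_unitCell (((continuous_pd hf i).comp
        (continuous_id.add continuous_const)).mul hg.continuous)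
    have int2 : IntegrableOn (fun x : Fin n → ℝ => f (x + t • e) * pd g i x) (unitCell n)
        (volume : Measure (Fin n → ℝ)) :=
      integrableOn_unitCell ((hf.continuous.comp
        (continuous_id.add continuous_const)).mul (continuous_pd hg i))
    rw [integral_add int1 int2] at hzero
    have hsplit : (∫ x in unitCell n, f (x + t • e) * pd g i x)
        = - ∫ x in unitCell n, pd f i (x + t • e) * g x := by linarith
    rw [hsplit]
    congr 1
    -- translation
    have hFper : IsPeriodic (fun x : Fin n → ℝ => g (x + (-t) • e) * pd f i x) :=
      isPeriodic_mul (isPeriodic_add_vec hgp _) (isPeriodic_pd hfp i)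
    have := (integral_translate hFper (t • e)).symm
    rw [this]
    apply setIntegral_congr_fun measurableSet_unitCell
    intro x _
    have harg : (x + t • e) + (-t) • e = x := by ext l; simp
    show pd f i (x + t • e) * g x = g ((x + t • e) + (-t) • e) * pd f i (x + t • e)
    rw [harg]
    ring
  -- now use uniqueness of derivatives
  have hfun : (fun t : ℝ => ∫ x in unitCell n, f (x + t • e) * pd g i x)
      = fun t : ℝ => - ((fun s : ℝ => ∫ x in unitCell n, g (x + s • e) * pd f i x) (-t)) :=
    funext fun t => hkey t
  have hneg : HasDerivAt (fun t : ℝ =>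
      - ((fun s : ℝ => ∫ x in unitCell n, g (x + s • e) * pd f i x) (-t)))
      (∫ x in unitCell n, pd g j x * pd f i x) 0 := by
    have h1 : HasDerivAt (fun t : ℝ =>
        (fun s : ℝ => ∫ x in unitCell n, g (x + s • e) * pd f i x) (-t))
        ((∫ x in unitCell n, pd g j x * pd f i x) * (-1)) 0 := by
      have hneg0 : HasDerivAt (fun t : ℝ => -t) (-1 : ℝ) 0 := (hasDerivAt_id 0).neg
      have hΘ' : HasDerivAt (fun s : ℝ => ∫ x in unitCell n, g (x + s • e) * pd f i x)
          (∫ x in unitCell n, pd g j x * pd f i x) (-(0:ℝ)) := by rwa [neg_zero]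
      exact hΘ'.comp 0 hneg0
    have := h1.neg
    simpa only [mul_neg, mul_one, neg_neg, Pi.neg_def] using this
  rw [hfun] at hΦ
  have hEq := hΦ.unique hneg
  rw [hEq]
  simp_rw [mul_comm (pd g j _) (pd f i _)]


lemma integral_double_sum {F : Fin n → Fin n → (Fin n → ℝ) → ℝ} (hF : ∀ i j, Continuous (F i j)) :
    (∫ x in unitCell n, ∑ i, ∑ j, F i j x) = ∑ i, ∑ j, ∫ x in unitCell n, F i j x := by
  rw [integral_finset_sum _ (fun i _ => integrable_finset_sum _
    (fun j _ => integrableOn_unitCell (hF i j)))]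
  exact Finset.sum_congr rfl fun i _ =>
    integral_finset_sum _ (fun j _ => integrableOn_unitCell (hF i j))


end Stmt15Aux

open Stmt15Aux

/-- for every `C¹` `ℤⁿ`-periodic vector field `w`,
`∫_Y (∇·w)² + (1/2)∫_Y |Dw − (Dw)ᵀ|² = ∫_Y |Dw|²`. -/
theorem stmt_15 {n : ℕ} (hn : 1 ≤ n)
    (w : (Fin n → ℝ) → Fin n → ℝ) (hw : ContDiff ℝ 1 w) (hper : IsPeriodic w) :
    (∫ x in unitCell n, (divg w x) ^ 2)
        + (1 / 2) * ∫ x in unitCell n, frobSq (jac w x - (jac w x).transpose)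
      = ∫ x in unitCell n, frobSq (jac w x) := by
  classical
  set p : Fin n → Fin n → (Fin n → ℝ) → ℝ := fun i j x => pd (fun y => w y i) j x with hp
  have hWc : ∀ i : Fin n, ContDiff ℝ 1 (fun y => w y i) := fun i => contDiff_pi.mp hw i
  have hWp : ∀ i : Fin n, IsPeriodic (fun y => w y i) := fun i x k => congrFun (hper x k) i
  have hpc : ∀ i j, Continuous (p i j) := fun i j => continuous_pd (hWc i) j
  -- the three integral reductions
  have h1 : (∫ x in unitCell n, (divg w x) ^ 2)
      = ∑ i, ∑ j, ∫ x in unitCell n, p i i x * p j j x := by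
    rw [← integral_double_sum (F := fun i j x => p i i x * p j j x) (fun i j => (hpc i i).mul (hpc j j))]
    apply setIntegral_congr_fun measurableSet_unitCell
    intro x _
    show (divg w x) ^ 2 = ∑ i, ∑ j, p i i x * p j j x
    rw [sq, divg, Finset.sum_mul_sum]
  have h3 : (∫ x in unitCell n, frobSq (jac w x))
      = ∑ i, ∑ j, ∫ x in unitCell n, p i j x * p i j x := by
    rw [← integral_double_sum (F := fun i j x => p i j x * p i j x) (fun i j => (hpc i j).mul (hpc i j))]
    apply setIntegral_congr_fun measurableSet_unitCell
    intro x _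
    show frobSq (jac w x) = _
    unfold frobSq
    exact Finset.sum_congr rfl fun i _ => Finset.sum_congr rfl fun j _ => by
      rw [sq]; rfl
  have h2 : (∫ x in unitCell n, frobSq (jac w x - (jac w x).transpose))
      = ∑ i, ∑ j, ∫ x in unitCell n,
          (p i j x * p i j x - 2 * (p i j x * p j i x) + p j i x * p j i x) := by
    rw [← integral_double_sum (F := fun i j x => p i j x * p i j x - 2 * (p i j x * p j i x) + p j i x * p j i x) (fun i j =>
      (((hpc i j).mul (hpc i j)).sub (continuous_const.mul ((hpc i j).mul (hpc j i)))).add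
        ((hpc j i).mul (hpc j i)))]
    apply setIntegral_congr_fun measurableSet_unitCell
    intro x _
    show frobSq _ = _
    unfold frobSq
    refine Finset.sum_congr rfl fun i _ => Finset.sum_congr rfl fun j _ => ?_
    have : (jac w x - (jac w x).transpose) i j = p i j x - p j i x := by
      simp [Matrix.sub_apply, Matrix.transpose_apply, jac, hp]
    rw [this]; ring
  -- expand each term of h2
  have h2' : (∫ x in unitCell n, frobSq (jac w x - (jac w x).transpose))
      = ∑ i, ∑ j, ((∫ x in unitCell n, p i j x * p i j x)
          - 2 * (∫ x in unitCell n, p i j x * p j i x)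
          + ∫ x in unitCell n, p j i x * p j i x) := by
    rw [h2]
    refine Finset.sum_congr rfl fun i _ => Finset.sum_congr rfl fun j _ => ?_
    have i1 : IntegrableOn (fun x => p i j x * p i j x) (unitCell n)
        (volume : Measure (Fin n → ℝ)) := integrableOn_unitCell ((hpc i j).mul (hpc i j))
    have i2 : IntegrableOn (fun x => p i j x * p j i x) (unitCell n)
        (volume : Measure (Fin n → ℝ)) := integrableOn_unitCell ((hpc i j).mul (hpc j i))
    have i3 : IntegrableOn (fun x => p j i x * p j i x) (unitCell n)
        (volume : Measure (Fin n → ℝ)) := integrableOn_unitCell ((hpc j i).mul (hpc j i))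
    have iA : IntegrableOn (fun x => p i j x * p i j x - 2 * (p i j x * p j i x)) (unitCell n)
        (volume : Measure (Fin n → ℝ)) := integrableOn_unitCell
      (((hpc i j).mul (hpc i j)).sub (continuous_const.mul ((hpc i j).mul (hpc j i))))
    have i2' : IntegrableOn (fun x => 2 * (p i j x * p j i x)) (unitCell n)
        (volume : Measure (Fin n → ℝ)) := integrableOn_unitCell
      (continuous_const.mul ((hpc i j).mul (hpc j i)))
    rw [integral_add iA i3, integral_sub i1 i2', MeasureTheory.integral_const_mul]
  -- key identity per term
  have hkey : ∀ i j : Fin n, (∫ x in unitCell n, p i i x * p j j x)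
      = ∫ x in unitCell n, p i j x * p j i x := by
    intro i j
    exact (key_ibp (hWc i) (hWp i) (hWc j) (hWp j) i j).symm
  set S : ℝ := ∑ i, ∑ j, ∫ x in unitCell n, p i j x * p i j x with hS
  set M : ℝ := ∑ i, ∑ j, ∫ x in unitCell n, p i j x * p j i x with hM
  have hA : (∫ x in unitCell n, (divg w x) ^ 2) = M := by
    rw [h1, hM]
    exact Finset.sum_congr rfl fun i _ => Finset.sum_congr rfl fun j _ => hkey i j
  have hC : (∫ x in unitCell n, frobSq (jac w x)) = S := h3
  have hB : (∫ x in unitCell n, frobSq (jac w x - (jac w x).transpose)) = 2 * S - 2 * M := by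
    rw [h2']
    have hsplit : ∑ i, ∑ j, ((∫ x in unitCell n, p i j x * p i j x)
        - 2 * (∫ x in unitCell n, p i j x * p j i x)
        + ∫ x in unitCell n, p j i x * p j i x)
      = S - 2 * M + ∑ i, ∑ j, ∫ x in unitCell n, p j i x * p j i x := by
      rw [hS, hM]
      simp only [Finset.sum_add_distrib, Finset.sum_sub_distrib, Finset.mul_sum]
    rw [hsplit]
    have hcomm : (∑ i, ∑ j, ∫ x in unitCell n, p j i x * p j i x) = S := by
      rw [hS]; exact Finset.sum_comm
    rw [hcomm]; ring
  rw [hA, hB, hC]; ring
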